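/- Let q > q_T be such that α(q) = a_1a_2… is irreducible and a_1 = M. Then there exists a strictly increasing sequence (m_j)_{j≥1} of positive integers such that for each j the word a_1…a_{m_j}⁻ is fundamental, m_{j+1} ≤ 2·m_j for every j, and m_1 = 2 if M = 1 while m_1 = 1 if M ≥ 2. -/

import Mathlib

open Filter Set

/-- Strict lexicographic order on digit sequences (0-indexed). -/
def seqLt (x y : ℕ → ℕ) : Prop := ∃ n, (∀ i < n, x i = y i) ∧ x n < y n

/-- Weak lexicographic order on digit sequences. -/
def seqLe (x y : ℕ → ℕ) : Prop := seqLt x y ∨ x = y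

/-- The sequence w0^∞ associated with a finite word. -/
def wordSeq (w : List ℕ) : ℕ → ℕ := fun i => w.getD i 0

/-- Words are compared via w ↦ w0^∞. -/
def wordLt (u v : List ℕ) : Prop := seqLt (wordSeq u) (wordSeq v)

def wordLe (u v : List ℕ) : Prop := seqLe (wordSeq u) (wordSeq v)

/-- Reflection of a sequence: each digit c is replaced by M - c. -/
def reflSeq (M : ℕ) (x : ℕ → ℕ) : ℕ → ℕ := fun i => M - x i

/-- Reflection of a word. -/
def reflW (M : ℕ) (w : List ℕ) : List ℕ := w.map (fun c => M - c)

/-- w⁺ : add one to the last digit. -/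
def wplus (w : List ℕ) : List ℕ := w.dropLast ++ [w.getLast! + 1]

/-- w⁻ : subtract one from the last digit. -/
def wminus (w : List ℕ) : List ℕ := w.dropLast ++ [w.getLast! - 1]

/-- n-fold left shift σⁿ. -/
def shiftn (x : ℕ → ℕ) (n : ℕ) : ℕ → ℕ := fun i => x (n + i)

/-- The prefix of length n of a sequence, as a word. -/
def pref (x : ℕ → ℕ) (n : ℕ) : List ℕ := (List.range n).map x

/-- The periodic sequence w^∞. -/
def periodic (w : List ℕ) : ℕ → ℕ := fun i => w.getD (i % w.length) 0

/-- The eventually periodic sequence u v^∞. -/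
def wordThenPer (u v : List ℕ) : ℕ → ℕ :=
  fun i => if i < u.length then u.getD i 0 else v.getD ((i - u.length) % v.length) 0

/-- A fundamental word over the alphabet {0,…,M}. -/
def IsFundamental (M : ℕ) (a : List ℕ) : Prop :=
  (∀ d ∈ a, d ≤ M) ∧
  ((a.length = 1 ∧ 2 ≤ M ∧ M - a.head! ≤ a.head! ∧ a.head! < M) ∨
   (2 ≤ a.length ∧ ∀ i, 1 ≤ i → i < a.length →
     wordLe (reflW M (a.take (a.length - i))) (a.drop i) ∧
     wordLt (a.drop i) (a.take (a.length - i))))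

/-- The block emitted by the two-state automaton computing Φ_a⁻¹, as a function of the previous
bit (`0` at the start, so that the automaton is in state A after a `1` and in state B after
a `0`) and the current bit: (1,1) ↦ overline(a), (1,0) ↦ overline(a⁺), (0,1) ↦ a⁺, (0,0) ↦ a. -/
def block (M : ℕ) (a : List ℕ) (prev cur : ℕ) : List ℕ :=
  if prev = 1 then (if cur = 1 then reflW M a else reflW M (wplus a))
  else (if cur = 1 then wplus a else a)

/-- Φ_a⁻¹ applied to a finite {0,1}-word b (whose first digit should be 1):
the concatenation of the blocks emitted by the automaton. -/
def phiInv (M : ℕ) (a : List ℕ) (b : List ℕ) : List ℕ :=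
  (List.range b.length).flatMap
    (fun i => block M a (if i = 0 then 0 else b.getD (i - 1) 0) (b.getD i 0))

/-- Φ_a⁻¹ applied to an infinite {0,1}-sequence b (whose first digit should be 1). -/
def phiInvSeq (M : ℕ) (a : List ℕ) (b : ℕ → ℕ) : ℕ → ℕ :=
  fun j =>
    (block M a (if j / a.length = 0 then 0 else b (j / a.length - 1)) (b (j / a.length))).getD
      (j % a.length) 0

/-- The set V = {x ∈ Ω_M : overline(x) ≼ σⁿ(x) ≼ x for all n ≥ 0}. -/
def Vset (M : ℕ) : Set (ℕ → ℕ) :=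
  {x | (∀ i, x i ≤ M) ∧ ∀ n, seqLe (reflSeq M x) (shiftn x n) ∧ seqLe (shiftn x n) x}

/-- An irreducible sequence (a_i) ∈ V: whenever a_j > 0 and (a_1…a_j⁻)^∞ ∈ V, one has
a_1…a_j(overline(a_1…a_j)⁺)^∞ ≺ (a_i). -/
def IrreducibleSeq (M : ℕ) (x : ℕ → ℕ) : Prop :=
  x ∈ Vset M ∧
  ∀ j, 1 ≤ j → 0 < x (j - 1) → periodic (wminus (pref x j)) ∈ Vset M →
    seqLt (wordThenPer (pref x j) (wplus (reflW M (pref x j)))) x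

/-- An irreducible fundamental word: one that is not a composition c∘d with c ∈ A_M, d ∈ A_1. -/
def IrreducibleWord (M : ℕ) (a : List ℕ) : Prop :=
  IsFundamental M a ∧
  ¬∃ c d : List ℕ, IsFundamental M c ∧ IsFundamental 1 d ∧ a = phiInv M c d

/-- a is the quasi-greedy q-expansion of 1 over alphabet {0,…,M}: the lexicographically largest
sequence with digits ≤ M, not ending in 0^∞, with Σ a_i q^{-i} = 1. -/
def isQuasiGreedy (M : ℕ) (q : ℝ) (a : ℕ → ℕ) : Prop :=
  (∀ i, a i ≤ M) ∧ (∀ N, ∃ i, N ≤ i ∧ a i ≠ 0) ∧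
  (∑' i : ℕ, (a i : ℝ) / q ^ (i + 1)) = 1 ∧
  ∀ b : ℕ → ℕ, (∀ i, b i ≤ M) → (∀ N, ∃ i, N ≤ i ∧ b i ≠ 0) →
    (∑' i : ℕ, (b i : ℝ) / q ^ (i + 1)) = 1 → seqLe b a

open Classical in
/-- The quasi-greedy expansion α(q) (well defined for q ∈ (1, M+1]). -/
noncomputable def alphaF (M : ℕ) (q : ℝ) : ℕ → ℕ :=
  if h : ∃ a, isQuasiGreedy M q a then h.choose else fun _ => 0

/-- The shifted Thue–Morse sequence: τ_i = (sum of binary digits of i) mod 2, τ_0 = 0. -/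
def tau (i : ℕ) : ℕ := (Nat.digits 2 i).sum % 2

/-- λ_i = k + τ_i - τ_{i-1} if M = 2k, and k + τ_i if M = 2k+1. -/
def lam (M i : ℕ) : ℕ := if M % 2 = 0 then M / 2 + tau i - tau (i - 1) else M / 2 + tau i

/-- The sequence (λ_i)_{i≥1} = α(q_KL), 0-indexed. -/
def lamSeq (M : ℕ) : ℕ → ℕ := fun n => lam M (n + 1)

/-- The sequence (τ_i)_{i≥1}, 0-indexed. -/
def tauSeq : ℕ → ℕ := fun n => tau (n + 1)

/-- The unit lift u_M: the word k if M = 2k, and (k+1)k if M = 2k+1. -/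
def unitLift (M : ℕ) : List ℕ := if M % 2 = 0 then [M / 2] else [M / 2 + 1, M / 2]

/-- α(q_n') = λ_1…λ_{2^{n-1}}(overline(λ_1…λ_{2^{n-1}})⁺)^∞ for M even, and
λ_1…λ_{2^n}(overline(λ_1…λ_{2^n})⁺)^∞ for M odd (n ≥ 1). -/
def alphaQn (M n : ℕ) : ℕ → ℕ :=
  wordThenPer (pref (lamSeq M) (if M % 2 = 0 then 2 ^ (n - 1) else 2 ^ n))
    (wplus (reflW M (pref (lamSeq M) (if M % 2 = 0 then 2 ^ (n - 1) else 2 ^ n))))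

/-- Ũ_q = {x ∈ Ω_M : overline(α(q)) ≺ σⁿ(x) ≺ α(q) for all n ≥ 0}. -/
def Utilde (M : ℕ) (q : ℝ) : Set (ℕ → ℕ) :=
  {x | (∀ i, x i ≤ M) ∧
    ∀ n, seqLt (reflSeq M (alphaF M q)) (shiftn x n) ∧ seqLt (shiftn x n) (alphaF M q)}

/-- V_q = {x ∈ Ω_M : overline(α(q)) ≼ σⁿ(x) ≼ α(q) for all n ≥ 0}. -/
def VqSet (M : ℕ) (q : ℝ) : Set (ℕ → ℕ) :=
  {x | (∀ i, x i ≤ M) ∧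
    ∀ n, seqLe (reflSeq M (alphaF M q)) (shiftn x n) ∧ seqLe (shiftn x n) (alphaF M q)}

/-- B_n(X): the set of length-n prefixes of sequences in X. -/
def prefixSet (X : Set (ℕ → ℕ)) (n : ℕ) : Set (List ℕ) := (fun x => pref x n) '' X

/-- Topological entropy h(X) = lim (log #B_n(X))/n (the limit exists for shift-invariant X,
in which case it coincides with the limsup used here). -/
noncomputable def entropyOf (X : Set (ℕ → ℕ)) : ℝ :=
  Filter.atTop.limsup fun n : ℕ => Real.log (Nat.card ↥(prefixSet X n)) / n

/-- The entropy function H(q) = h(Ũ_q). -/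
noncomputable def Hent (M : ℕ) (q : ℝ) : ℝ := entropyOf (Utilde M q)

/-- c_M = 1 for even M, 1/2 for odd M. -/
noncomputable def cM (M : ℕ) : ℝ := if M % 2 = 0 then 1 else 1 / 2

/-- The fundamental interval J_a = [q_L(a), q_R(a)], described via the characterizations
α(q_L(a)) = a^∞ and α(q_R(a)) = a⁺(overline(a))^∞. -/
def Jset (M : ℕ) (a : List ℕ) : Set ℝ :=
  {q | ∃ qL qR : ℝ, qL ∈ Set.Ioc (1:ℝ) ((M:ℝ)+1) ∧ qR ∈ Set.Ioc (1:ℝ) ((M:ℝ)+1) ∧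
    alphaF M qL = periodic a ∧ alphaF M qR = wordThenPer (wplus a) (reflW M a) ∧
    q ∈ Set.Icc qL qR}

/-- The word w occurs (as a factor) in some sequence of X. -/
def occursIn (w : List ℕ) (X : Set (ℕ → ℕ)) : Prop :=
  ∃ x ∈ X, ∃ k, ∀ i < w.length, x (k + i) = w.getD i 0

/-- [pL, pR] is an entropy plateau: a maximal interval in (1, M+1] on which H is positive
and constant. -/
def IsPlateau (M : ℕ) (pL pR : ℝ) : Prop :=
  pL ≤ pR ∧ Set.Icc pL pR ⊆ Set.Ioc 1 ((M:ℝ)+1) ∧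
  (∀ q ∈ Set.Icc pL pR, 0 < Hent M q ∧ Hent M q = Hent M pL) ∧
  ∀ S : Set ℝ, S.OrdConnected → S ⊆ Set.Ioc 1 ((M:ℝ)+1) →
    (∀ q ∈ S, 0 < Hent M q) → (∀ q ∈ S, ∀ q' ∈ S, Hent M q = Hent M q') →
    Set.Icc pL pR ⊆ S → S = Set.Icc pL pR

/-- An n-irreducible word (n ≥ 1): a = u_M ∘ (10)^{∘(n-1)} ∘ b with b ∈ A_1 irreducible. -/
def nIrreducibleWord (M n : ℕ) (a : List ℕ) : Prop :=
  ∃ b : List ℕ, IrreducibleWord 1 b ∧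
    a = phiInv M ((fun w => phiInv M w [1, 0])^[n - 1] (unitLift M)) b

namespace S14

/-- Bad1 i m : anti-periodicity witness. -/
def Bad1 (M : ℕ) (a : ℕ → ℕ) (i m : ℕ) : Prop := ∀ t, t < m - i → a (i + t) = M - a t

/-- The good (type-1 fundamental) prefixes. -/
def GoodW (M : ℕ) (a : ℕ → ℕ) (m : ℕ) : Prop :=
  2 ≤ m ∧ 1 ≤ a (m - 1) ∧ ∀ i, 1 ≤ i → i < m → ¬ Bad1 M a i m

/-- The digits of the word a₁…a_m⁻. -/
def Bf (a : ℕ → ℕ) (m t : ℕ) : ℕ := if t = m - 1 then a (m - 1) - 1 else a t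

theorem seq_le_of_agree {x y : ℕ → ℕ} (h : seqLe x y) {n : ℕ}
    (hag : ∀ i < n, x i = y i) : x n ≤ y n := by
  rcases h with ⟨n₀, h₀, hlt⟩ | rfl
  · rcases lt_trichotomy n₀ n with hc | rfl | hc
    · exact absurd (hag n₀ hc) (Nat.ne_of_lt hlt)
    · exact hlt.le
    · exact (h₀ n hc).le
  · exact le_rfl

theorem exists_least {P : ℕ → Prop} {N : ℕ} (h : ¬ ∀ t, t < N → P t) :
    ∃ t₀, t₀ < N ∧ (∀ t < t₀, P t) ∧ ¬ P t₀ := by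
  classical
  push_neg at h
  obtain ⟨t, htN, ht⟩ := h
  have hex : ∃ t, t < N ∧ ¬ P t := ⟨t, htN, ht⟩
  refine ⟨Nat.find hex, (Nat.find_spec hex).1, fun s hs => ?_, (Nat.find_spec hex).2⟩
  by_contra hPs
  exact Nat.find_min hex hs ⟨hs.trans_le (Nat.find_spec hex).1.le, hPs⟩

theorem getD_pref (x : ℕ → ℕ) (n i : ℕ) :
    (pref x n).getD i 0 = if i < n then x i else 0 := by
  split
  · next h => simp [pref, List.getD_eq_getElem?_getD, List.getElem?_map, List.getElem?_range, h]
  · next h =>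
    rw [pref, List.getD_eq_getElem?_getD, List.getElem?_map,
      List.getElem?_eq_none (by simpa using h)]; rfl

theorem length_pref (x : ℕ → ℕ) (n : ℕ) : (pref x n).length = n := by
  simp [pref]

theorem pref_succ (x : ℕ → ℕ) (k : ℕ) : pref x (k + 1) = pref x k ++ [x k] := by
  simp [pref, List.range_succ]

theorem getLast!_concat (l : List ℕ) (c : ℕ) : (l ++ [c]).getLast! = c :=
  List.getLast!_of_getLast? (List.getLast?_concat (l := l))

theorem wminus_pref (x : ℕ → ℕ) (k : ℕ) :
    wminus (pref x (k + 1)) = pref x k ++ [x k - 1] := by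
  rw [wminus, pref_succ, List.dropLast_concat, getLast!_concat]

theorem wplus_reflW_pref (M : ℕ) (x : ℕ → ℕ) (k : ℕ) :
    wplus (reflW M (pref x (k + 1))) = pref (fun i => M - x i) k ++ [M - x k + 1] := by
  have : reflW M (pref x (k + 1)) = pref (fun i => M - x i) (k + 1) := by
    simp [reflW, pref, List.map_map]
  rw [wplus, this, pref_succ, List.dropLast_concat, getLast!_concat]

theorem getD_concat_pref (f : ℕ → ℕ) (k c t : ℕ) :
    (pref f k ++ [c]).getD t 0 = if t < k then f t else if t = k then c else 0 := by
  rcases lt_trichotomy t k with h | rfl | h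
  · rw [List.getD_eq_getElem?_getD, List.getElem?_append_left (by simp [length_pref]; omega),
      ← List.getD_eq_getElem?_getD, getD_pref]
    simp [h]
  · rw [List.getD_eq_getElem?_getD, List.getElem?_append_right (by simp [length_pref])]
    simp [length_pref]
  · rw [List.getD_eq_getElem?_getD, List.getElem?_eq_none (by simp [length_pref]; omega)]
    simp only [Option.getD_none]
    rw [if_neg (by omega), if_neg (by omega)]

theorem getD_wminus_pref (a : ℕ → ℕ) {m : ℕ} (hm : 1 ≤ m) (t : ℕ) :
    (wminus (pref a m)).getD t 0 = if t < m then Bf a m t else 0 := by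
  obtain ⟨k, rfl⟩ : ∃ k, m = k + 1 := ⟨m - 1, by omega⟩
  rw [wminus_pref, getD_concat_pref]
  unfold Bf
  rcases lt_trichotomy t k with h | rfl | h
  · simp only [if_pos h, if_pos (show t < k + 1 by omega), if_neg (show t ≠ (k+1)-1 by omega)]
  · simp
  · simp only [if_neg (show ¬ t < k by omega), if_neg (show t ≠ k by omega),
      if_neg (show ¬ t < k + 1 by omega)]

theorem length_wminus_pref (a : ℕ → ℕ) {m : ℕ} (hm : 1 ≤ m) :
    (wminus (pref a m)).length = m := by
  obtain ⟨k, rfl⟩ : ∃ k, m = k + 1 := ⟨m - 1, by omega⟩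
  rw [wminus_pref]; simp [length_pref]

theorem getD_drop (l : List ℕ) (n i : ℕ) : (l.drop n).getD i 0 = l.getD (n + i) 0 := by
  simp [List.getD_eq_getElem?_getD, List.getElem?_drop]

theorem getD_take (l : List ℕ) (n i : ℕ) :
    (l.take n).getD i 0 = if i < n then l.getD i 0 else 0 := by
  split
  · next h => simp [List.getD_eq_getElem?_getD, List.getElem?_take, h]
  · next h => rw [List.getD_eq_getElem?_getD, List.getElem?_eq_none (by simp; omega)]; rfl

theorem getD_reflW (M : ℕ) (l : List ℕ) (i : ℕ) :
    (reflW M l).getD i 0 = if i < l.length then M - l.getD i 0 else 0 := by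
  split
  · next h =>
    rw [reflW, List.getD_eq_getElem?_getD, List.getElem?_map, List.getElem?_eq_getElem h]
    simp [List.getD_eq_getElem?_getD, List.getElem?_eq_getElem h]
  · next h =>
    rw [reflW, List.getD_eq_getElem?_getD, List.getElem?_map,
      List.getElem?_eq_none (by omega)]; rfl

end S14
namespace S14

section Windows
variable {M : ℕ} {a : ℕ → ℕ}
variable (hVd : ∀ i, a i ≤ M) (hsu : ∀ n, seqLe (shiftn a n) a)
  (hsl : ∀ n, seqLe (reflSeq M a) (shiftn a n))

include hsu in
theorem per_le (i k : ℕ) (hag : ∀ t < k, a (i + t) = a t) : a (i + k) ≤ a k :=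
  seq_le_of_agree (hsu i) hag

include hsl in
theorem anti_le (i k : ℕ) (hag : ∀ t < k, M - a t = a (i + t)) : M - a k ≤ a (i + k) :=
  seq_le_of_agree (hsl i) hag

include hsu in
/-- F2 window lemma: strict comparison of σⁱ(w) with w within the window. -/
theorem window_lt {m : ℕ} (hG : GoodW M a m) (i : ℕ) (hi1 : 1 ≤ i) (him : i < m) :
    ∃ t₀, t₀ < m - i ∧ (∀ t < t₀, Bf a m (i + t) = Bf a m t) ∧
      Bf a m (i + t₀) < Bf a m t₀ := by
  obtain ⟨hm2, ham, -⟩ := hG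
  by_cases hall : ∀ t, t < m - i → Bf a m (i + t) = Bf a m t
  · exfalso
    have key : ∀ t < m - 1 - i, a (i + t) = a t := by
      intro t ht
      have := hall t (by omega)
      rwa [Bf, if_neg (by omega), Bf, if_neg (by omega)] at this
    have hle : a (i + (m - 1 - i)) ≤ a (m - 1 - i) := per_le hsu i _ key
    have heq := hall (m - 1 - i) (by omega)
    rw [Bf, if_pos (by omega), Bf, if_neg (by omega)] at heq
    rw [show i + (m - 1 - i) = m - 1 by omega] at hle
    omega
  · obtain ⟨t₀, ht₀, hag, hne⟩ := exists_least hall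
    have haga : ∀ t < t₀, a (i + t) = a t := by
      intro t ht
      have := hag t ht
      rwa [Bf, if_neg (by omega), Bf, if_neg (by omega)] at this
    have hle : a (i + t₀) ≤ a t₀ := per_le hsu i _ haga
    refine ⟨t₀, ht₀, hag, ?_⟩
    have ht0ne : t₀ ≠ m - 1 := by omega
    by_cases hc : i + t₀ = m - 1
    · simp only [Bf, if_pos hc, if_neg ht0ne]
      rw [hc] at hle
      omega
    · simp only [Bf, if_neg hc, if_neg ht0ne]
      simp only [Bf, if_neg hc, if_neg ht0ne] at hne
      omega

include hsl in
/-- F1 window lemma: either full anti-agreement on the window, or strict. -/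
theorem window_refl_le {m : ℕ} (hG : GoodW M a m) (i : ℕ) (hi1 : 1 ≤ i) (him : i < m) :
    (∀ t, t < m - i → M - Bf a m t = Bf a m (i + t)) ∨
      ∃ t₀, t₀ < m - i ∧ (∀ t < t₀, M - Bf a m t = Bf a m (i + t)) ∧
        M - Bf a m t₀ < Bf a m (i + t₀) := by
  obtain ⟨hm2, ham, hnb⟩ := hG
  by_cases hall : ∀ t, t < m - i → M - Bf a m t = Bf a m (i + t)
  · exact Or.inl hall
  · obtain ⟨t₀, ht₀, hag, hne⟩ := exists_least hall
    have haga : ∀ t < t₀, M - a t = a (i + t) := by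
      intro t ht
      have := hag t ht
      rwa [Bf, if_neg (by omega), Bf, if_neg (by omega)] at this
    have hle : M - a t₀ ≤ a (i + t₀) := anti_le hsl i _ haga
    refine Or.inr ⟨t₀, ht₀, hag, ?_⟩
    have ht0ne : t₀ ≠ m - 1 := by omega
    by_cases hc : i + t₀ = m - 1
    · simp only [Bf, if_pos hc, if_neg ht0ne]
      simp only [Bf, if_pos hc, if_neg ht0ne] at hne
      rw [hc] at hle
      by_cases hB : M - a t₀ = a (m - 1)
      · exfalso
        refine hnb i hi1 him (fun t ht => ?_)
        rcases Nat.lt_or_ge t t₀ with h | h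
        · exact (haga t h).symm
        · have : t = t₀ := by omega
          rw [this, hc, ← hB]
      · omega
    · simp only [Bf, if_neg hc, if_neg ht0ne]
      simp only [Bf, if_neg hc, if_neg ht0ne] at hne
      omega

end Windows
end S14
namespace S14

section Pieces
variable {M : ℕ} {a : ℕ → ℕ}
variable (hVd : ∀ i, a i ≤ M) (hsu : ∀ n, seqLe (shiftn a n) a)
  (hsl : ∀ n, seqLe (reflSeq M a) (shiftn a n)) (h1 : a 0 = M) (hM : 1 ≤ M)

include hVd hsu hsl in
theorem isFundamental_of_good {m : ℕ} (hG : GoodW M a m) :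
    IsFundamental M (wminus (pref a m)) := by
  have hm2 := hG.1
  have hm1 : 1 ≤ m := by omega
  have hlen : (wminus (pref a m)).length = m := length_wminus_pref a hm1
  constructor
  · -- digits ≤ M
    intro d hd
    obtain ⟨k, rfl⟩ : ∃ k, m = k + 1 := ⟨m - 1, by omega⟩
    rw [wminus_pref] at hd
    rcases List.mem_append.1 hd with h | h
    · obtain ⟨i, -, rfl⟩ := List.mem_map.1 h
      exact hVd i
    · rw [List.mem_singleton] at h
      have := hVd k
      omega
  · refine Or.inr ⟨by omega, fun i hi1 him => ?_⟩
    rw [hlen] at him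
    set w := wminus (pref a m) with hw
    have hWS : ∀ t, wordSeq w t = if t < m then Bf a m t else 0 := fun t =>
      getD_wminus_pref a hm1 t
    have hdrop : ∀ t, wordSeq (w.drop i) t = if i + t < m then Bf a m (i + t) else 0 := by
      intro t; rw [wordSeq, getD_drop, ← wordSeq, hWS]
    have htake : ∀ t, wordSeq (w.take (m - i)) t = if t < m - i then Bf a m t else 0 := by
      intro t
      rw [wordSeq, getD_take, ← wordSeq, hWS]
      rcases Nat.lt_or_ge t (m - i) with h | h
      · rw [if_pos h, if_pos h, if_pos (by omega)]
      · rw [if_neg (by omega), if_neg (by omega)]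
    have hlentake : (w.take (m - i)).length = m - i := by
      rw [List.length_take, hlen]; omega
    have hrefl : ∀ t, wordSeq (reflW M (w.take (m - i))) t =
        if t < m - i then M - Bf a m t else 0 := by
      intro t
      rw [wordSeq, getD_reflW, hlentake, ← wordSeq, htake]
      rcases Nat.lt_or_ge t (m - i) with h | h
      · rw [if_pos h, if_pos h, if_pos h]
      · rw [if_neg (by omega), if_neg (by omega)]
    rw [hlen]
    constructor
    · -- F1
      rcases window_refl_le hsl hG i hi1 him with hE | ⟨t₀, ht₀, hag, hst⟩
      · right
        funext t
        rw [hrefl, hdrop]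
        rcases Nat.lt_or_ge t (m - i) with h | h
        · rw [if_pos h, if_pos (by omega)]
          exact hE t h
        · rw [if_neg (by omega), if_neg (by omega)]
      · left
        refine ⟨t₀, fun t ht => ?_, ?_⟩
        · rw [hrefl, hdrop, if_pos (by omega), if_pos (by omega)]
          exact hag t ht
        · rw [hrefl, hdrop, if_pos (by omega), if_pos (by omega)]
          exact hst
    · -- F2
      obtain ⟨t₀, ht₀, hag, hst⟩ := window_lt hsu hG i hi1 him
      refine ⟨t₀, fun t ht => ?_, ?_⟩
      · rw [hdrop, htake, if_pos (by omega), if_pos (by omega)]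
        exact hag t ht
      · rw [hdrop, htake, if_pos (by omega), if_pos (by omega)]
        exact hst

include hVd hsu hsl h1 hM in
theorem periodic_mem_V {m : ℕ} (hG : GoodW M a m) :
    periodic (wminus (pref a m)) ∈ Vset M := by
  have hm2 := hG.1
  have hm1 : 1 ≤ m := by omega
  have hmpos : 0 < m := hm1
  set x := periodic (wminus (pref a m)) with hx
  have hxe : ∀ j, x j = Bf a m (j % m) := by
    intro j
    rw [hx, periodic, length_wminus_pref a hm1, getD_wminus_pref a hm1,
      if_pos (Nat.mod_lt j hmpos)]
  have hBle : ∀ t, Bf a m t ≤ M := by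
    intro t
    rw [Bf]; split <;> [exact le_trans (Nat.sub_le _ _) (hVd _); exact hVd t]
  have hshift : ∀ n j, shiftn x n j = Bf a m ((n % m + j) % m) := by
    intro n j
    rw [shiftn, hxe]
    congr 1
    conv_lhs => rw [Nat.add_mod]
    conv_rhs => rw [Nat.add_mod, Nat.mod_mod_of_dvd n (dvd_refl m)]
  have hmod : ∀ u v : ℕ, (u + v) % m = (u + v % m) % m := by
    intro u v
    conv_lhs => rw [Nat.add_mod]
    conv_rhs => rw [Nat.add_mod, Nat.mod_mod_of_dvd v (dvd_refl m)]
  have hB0 : Bf a m 0 = M := by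
    rw [Bf, if_neg (by omega), h1]
  refine ⟨fun j => (hxe j) ▸ hBle _, fun n => ?_⟩
  set i := n % m with hi
  have him : i < m := Nat.mod_lt n hmpos
  have hsh : ∀ j, shiftn x n j = Bf a m ((i + j) % m) := fun j => hshift n j
  by_cases hi0 : i = 0
  · constructor
    · left
      refine ⟨0, fun t ht => absurd ht (Nat.not_lt_zero t), ?_⟩
      rw [hsh, hi0, reflSeq, hxe]
      simp only [Nat.zero_add, Nat.zero_mod]
      rw [hB0]
      omega
    · right
      funext j
      rw [hsh, hi0, hxe, Nat.zero_add]
  · have hi1 : 1 ≤ i := by omega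
    constructor
    · -- refl x ≼ σⁿ x
      rcases window_refl_le hsl hG i hi1 him with hE | ⟨t₀, ht₀, hag, hst⟩
      · -- full agreement on window; look at i' := m - i
        have hi'1 : 1 ≤ m - i := by omega
        have hi'm : m - i < m := by omega
        rcases window_refl_le hsl hG (m - i) hi'1 hi'm with hE' | ⟨t₁, ht₁, hag₁, hst₁⟩
        · -- doubly periodic: sequences are equal
          right
          funext j
          rw [reflSeq, hxe, hsh, hmod]
          set s := j % m with hs
          have hsm : s < m := Nat.mod_lt j hmpos
          rcases Nat.lt_or_ge s (m - i) with h | h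
          · rw [Nat.mod_eq_of_lt (by omega)]
            exact hE s h
          · have ht' : i + s = m + (s - (m - i)) := by omega
            rw [ht', Nat.add_mod_left, Nat.mod_eq_of_lt (by omega)]
            have h2 := hE' (s - (m - i)) (by omega)
            rw [show m - i + (s - (m - i)) = s by omega] at h2
            have := hBle s
            have := hBle (s - (m - i))
            omega
        · -- strict beyond the window
          left
          have ht₁i : t₁ < i := by omega
          refine ⟨m - i + t₁, fun t ht => ?_, ?_⟩
          · rw [reflSeq, hxe, hsh]
            rcases Nat.lt_or_ge t (m - i) with h | h
            · rw [Nat.mod_eq_of_lt (show t < m by omega), Nat.mod_eq_of_lt (by omega)]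
              exact hE t h
            · have hsdef : i + t = m + (t - (m - i)) := by omega
              rw [Nat.mod_eq_of_lt (show t < m by omega), hsdef, Nat.add_mod_left,
                Nat.mod_eq_of_lt (by omega)]
              have h2 := hag₁ (t - (m - i)) (by omega)
              rw [show m - i + (t - (m - i)) = t by omega] at h2
              have := hBle t
              have := hBle (t - (m - i))
              omega
          · rw [reflSeq, hxe, hsh]
            have hsdef : i + (m - i + t₁) = m + t₁ := by omega
            rw [Nat.mod_eq_of_lt (show m - i + t₁ < m by omega), hsdef, Nat.add_mod_left,
              Nat.mod_eq_of_lt (by omega)]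
            have := hBle t₁
            have := hBle (m - i + t₁)
            omega
      · left
        refine ⟨t₀, fun t ht => ?_, ?_⟩
        · rw [reflSeq, hxe, hsh, Nat.mod_eq_of_lt (by omega), Nat.mod_eq_of_lt (by omega)]
          exact hag t ht
        · rw [reflSeq, hxe, hsh, Nat.mod_eq_of_lt (by omega), Nat.mod_eq_of_lt (by omega)]
          exact hst
    · -- σⁿ x ≼ x
      obtain ⟨t₀, ht₀, hag, hst⟩ := window_lt hsu hG i hi1 him
      left
      refine ⟨t₀, fun t ht => ?_, ?_⟩
      · rw [hsh, hxe, Nat.mod_eq_of_lt (by omega), Nat.mod_eq_of_lt (by omega)]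
        exact hag t ht
      · rw [hsh, hxe, Nat.mod_eq_of_lt (by omega), Nat.mod_eq_of_lt (by omega)]
        exact hst

end Pieces
end S14
namespace S14

section Key
variable {M : ℕ} {a : ℕ → ℕ}
variable (hVd : ∀ i, a i ≤ M) (hsu : ∀ n, seqLe (shiftn a n) a)

/-- The digits of the word a₁…a_m(overline(a₁…a_m))⁺ beyond position m. -/
def VD (M : ℕ) (a : ℕ → ℕ) (m t : ℕ) : ℕ :=
  if t = m - 1 then M - a (m - 1) + 1 else M - a t

include hVd hsu in
theorem key_step {m : ℕ} (hm : 1 ≤ m) (ham : 1 ≤ a (m - 1))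
    (hnb : ∀ i, 1 ≤ i → i < m → ¬ Bad1 M a i m)
    (hs : seqLt (wordThenPer (pref a m) (wplus (reflW M (pref a m)))) a) :
    ∃ m', m < m' ∧ m' ≤ 2 * m ∧ GoodW M a m' := by
  obtain ⟨k, rfl⟩ : ∃ k, m = k + 1 := ⟨m - 1, by omega⟩
  set m := k + 1
  set s := wordThenPer (pref a m) (wplus (reflW M (pref a m))) with hsdef
  have hvlen : (wplus (reflW M (pref a m))).length = m := by
    rw [wplus_reflW_pref]
    simp [length_pref]; rfl
  have hse_lt : ∀ j, j < m → s j = a j := by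
    intro j hj
    rw [hsdef, wordThenPer, length_pref, if_pos hj, getD_pref, if_pos hj]
  have hse_ge : ∀ j, m ≤ j → s j = VD M a m ((j - m) % m) := by
    intro j hj
    rw [hsdef, wordThenPer, length_pref, if_neg (by omega), hvlen, wplus_reflW_pref,
      getD_concat_pref]
    have hlt : (j - m) % m < m := Nat.mod_lt _ (by omega)
    rw [VD]
    rcases Nat.lt_or_ge ((j - m) % m) k with h | h
    · rw [if_pos h, if_neg (by omega)]
    · rw [if_neg (by omega), if_pos (by omega), if_pos (by omega),
        show m - 1 = k from rfl]
  obtain ⟨n, hag, hlt⟩ := hs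
  have hnm : m ≤ n := by
    by_contra h
    rw [hse_lt n (by omega)] at hlt
    omega
  have hVDle : ∀ t, VD M a m t ≤ M := by
    intro t
    have h1 := hVd (m - 1)
    have h2 := hVd t
    rw [VD]
    split
    · omega
    · omega
  rcases Nat.lt_or_ge (n - m) m with ht | ht
  · -- Case I : m' = n + 1
    obtain ⟨t, rfl⟩ : ∃ t', n = m + t' := ⟨n - m, by omega⟩
    have htm : t < m := by omega
    have hA : ∀ t', t' < t → a (m + t') = VD M a m t' := by
      intro t' h
      have := hag (m + t') (by omega)
      rw [hse_ge _ (by omega), Nat.add_sub_cancel_left, Nat.mod_eq_of_lt (by omega)] at this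
      exact this.symm
    have hlt' : VD M a m t < a (m + t) := by
      rw [hse_ge (m + t) (by omega), Nat.add_sub_cancel_left, Nat.mod_eq_of_lt htm] at hlt
      exact hlt
    refine ⟨m + t + 1, by omega, by omega, by omega, ?_, ?_⟩
    · -- 1 ≤ a (m + t)
      rw [show m + t + 1 - 1 = m + t by omega]
      omega
    · intro i hi1 hin hB
      rcases Nat.lt_or_ge i m with him | him
      · refine hnb i hi1 him (fun u hu => hB u (by omega))
      · rcases Nat.eq_or_lt_of_le him with rfl | him2
        · -- i = m
          have h5 := hB t (by omega)
          rw [VD] at hlt'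
          by_cases hc : t = m - 1
          · rw [if_pos hc] at hlt'
            rw [show a t = a (m - 1) by rw [hc]] at h5
            omega
          · rw [if_neg hc] at hlt'
            omega
        · -- i = m + s', 1 ≤ s' ≤ t
          set s' := i - m with hs'def
          have hs'1 : 1 ≤ s' := by omega
          have hs'le : s' ≤ t := by omega
          have hag2 : ∀ u, u < t - s' → a (s' + u) = a u := by
            intro u hu
            have h2 := hB u (by omega)
            rw [show i + u = m + (s' + u) by omega] at h2
            rw [hA (s' + u) (by omega), VD, if_neg (by omega)] at h2
            have := hVd (s' + u)
            have := hVd u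
            omega
          have hple : a t ≤ a (t - s') := by
            have := per_le hsu s' (t - s') hag2
            rwa [show s' + (t - s') = t by omega] at this
          have h3 := hB (t - s') (by omega)
          rw [show i + (t - s') = m + t by omega] at h3
          rw [VD] at hlt'
          have h4 : M - a (t - s') ≤ M - a t := Nat.sub_le_sub_left hple M
          by_cases hc : t = m - 1
          · rw [if_pos hc] at hlt'
            rw [show a t = a (m - 1) by rw [hc]] at h4
            omega
          · rw [if_neg hc] at hlt'
            omega
  · -- Case II : m' = 2m
    have hA2 : ∀ t', t' < m → a (m + t') = VD M a m t' := by
      intro t' h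
      have := hag (m + t') (by omega)
      rw [hse_ge _ (by omega), Nat.add_sub_cancel_left, Nat.mod_eq_of_lt (by omega)] at this
      exact this.symm
    have hlast : a (2 * m - 1) = M - a (m - 1) + 1 := by
      have := hA2 (m - 1) (by omega)
      rw [show m + (m - 1) = 2 * m - 1 by omega, VD, if_pos rfl] at this
      exact this
    refine ⟨2 * m, by omega, by omega, by omega, by omega, ?_⟩
    intro i hi1 hin hB
    rcases Nat.lt_or_ge i m with him | him
    · refine hnb i hi1 him (fun u hu => hB u (by omega))
    · rcases Nat.eq_or_lt_of_le him with rfl | him2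
      · have := hB (m - 1) (by omega)
        rw [show m + (m - 1) = 2 * m - 1 by omega] at this
        omega
      · set s' := i - m with hs'def
        have hs'1 : 1 ≤ s' := by omega
        have hs'm : s' < m := by omega
        have hag2 : ∀ u, u < m - 1 - s' → a (s' + u) = a u := by
          intro u hu
          have h2 := hB u (by omega)
          rw [show i + u = m + (s' + u) by omega] at h2
          rw [hA2 (s' + u) (by omega), VD, if_neg (by omega)] at h2
          have := hVd (s' + u)
          have := hVd u
          omega
        have hple : a (m - 1) ≤ a (m - 1 - s') := by
          have := per_le hsu s' (m - 1 - s') hag2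
          rwa [show s' + (m - 1 - s') = m - 1 by omega] at this
        have h3 := hB (m - 1 - s') (by omega)
        rw [show i + (m - 1 - s') = 2 * m - 1 by omega] at h3
        have h4 : M - a (m - 1 - s') ≤ M - a (m - 1) := Nat.sub_le_sub_left hple M
        omega

end Key
end S14
namespace S14

theorem summable_digits {q : ℝ} (hq : 1 < q) (M : ℕ) (b : ℕ → ℕ) (hb : ∀ i, b i ≤ M) :
    Summable (fun i => (b i : ℝ) / q ^ (i + 1)) := by
  have h0 : (0:ℝ) < q := by linarith
  have hlt : 1 / q < 1 := by rw [div_lt_one h0]; exact hq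
  have hge : (0:ℝ) ≤ 1 / q := by positivity
  have hgeo : Summable (fun i : ℕ => (M : ℝ) * ((1/q) * (1/q) ^ i)) :=
    ((summable_geometric_of_lt_one hge hlt).mul_left _).mul_left _
  refine Summable.of_nonneg_of_le (fun i => by positivity) (fun i => ?_) hgeo
  have h1 : (b i : ℝ) ≤ (M : ℝ) := Nat.cast_le.2 (hb i)
  have h2 : (1/q) * (1/q)^i = 1 / q^(i+1) := by
    rw [one_div, ← pow_succ', inv_pow, ← one_div]
  rw [h2, mul_one_div]
  gcongr

theorem tsum_geo_aux {q : ℝ} (hq : 1 < q) :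
    (Summable fun i : ℕ => (1/q) ^ (i + 1)) ∧ (∑' i : ℕ, (1/q) ^ (i + 1)) = 1 / (q - 1) := by
  have h0 : (0:ℝ) < q := by linarith
  have hlt : 1 / q < 1 := by rw [div_lt_one h0]; exact hq
  have hge : (0:ℝ) ≤ 1 / q := by positivity
  have hs : Summable (fun i : ℕ => (1/q) * (1/q) ^ i) :=
    (summable_geometric_of_lt_one hge hlt).mul_left _
  have hpow : ∀ i : ℕ, (1/q) * (1/q)^i = (1/q)^(i+1) := fun i => (pow_succ' _ _).symm
  constructor
  · exact hs.congr hpow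
  · rw [← tsum_congr hpow, tsum_mul_left, tsum_geometric_of_lt_one hge hlt]
    field_simp

theorem inv_pow_bound {r : ℝ} (h1 : 1 < r) (h2 : r ≤ 44/25) (k : ℕ) :
    (25/44 : ℝ)^k ≤ 1 / r^k := by
  have h0 : (0:ℝ) < r := by linarith
  rw [le_div_iff₀ (by positivity), ← mul_pow]
  exact pow_le_one₀ (by positivity) (by nlinarith)

theorem qT_gt {qT : ℝ} (h1T : 1 < qT) (hT : isQuasiGreedy 1 qT (alphaQn 1 1)) :
    (44:ℝ)/25 < qT := by
  by_contra hcon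
  push_neg at hcon
  have hS : Summable (fun i => (alphaQn 1 1 i : ℝ) / qT ^ (i + 1)) :=
    summable_digits h1T 1 _ hT.1
  have hpart : ∑ i ∈ Finset.range 8, (alphaQn 1 1 i : ℝ) / qT ^ (i + 1) ≤ 1 := by
    rw [← hT.2.2.1]
    exact Summable.sum_le_tsum _ (fun i _ => by positivity) hS
  have d0 : alphaQn 1 1 0 = 1 := by norm_num [alphaQn, wordThenPer, pref, lamSeq, lam, tau, wplus, reflW, List.range_succ, List.getLast!_cons_eq_getLastD]
  have d1 : alphaQn 1 1 1 = 1 := by norm_num [alphaQn, wordThenPer, pref, lamSeq, lam, tau, wplus, reflW, List.range_succ, List.getLast!_cons_eq_getLastD]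
  have d2 : alphaQn 1 1 2 = 0 := by norm_num [alphaQn, wordThenPer, pref, lamSeq, lam, tau, wplus, reflW, List.range_succ, List.getLast!_cons_eq_getLastD]
  have d3 : alphaQn 1 1 3 = 1 := by norm_num [alphaQn, wordThenPer, pref, lamSeq, lam, tau, wplus, reflW, List.range_succ, List.getLast!_cons_eq_getLastD]
  have d4 : alphaQn 1 1 4 = 0 := by norm_num [alphaQn, wordThenPer, pref, lamSeq, lam, tau, wplus, reflW, List.range_succ, List.getLast!_cons_eq_getLastD]
  have d5 : alphaQn 1 1 5 = 1 := by norm_num [alphaQn, wordThenPer, pref, lamSeq, lam, tau, wplus, reflW, List.range_succ, List.getLast!_cons_eq_getLastD]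
  have d6 : alphaQn 1 1 6 = 0 := by norm_num [alphaQn, wordThenPer, pref, lamSeq, lam, tau, wplus, reflW, List.range_succ, List.getLast!_cons_eq_getLastD]
  have d7 : alphaQn 1 1 7 = 1 := by norm_num [alphaQn, wordThenPer, pref, lamSeq, lam, tau, wplus, reflW, List.range_succ, List.getLast!_cons_eq_getLastD]
  rw [Finset.sum_range_succ, Finset.sum_range_succ, Finset.sum_range_succ,
    Finset.sum_range_succ, Finset.sum_range_succ, Finset.sum_range_succ,
    Finset.sum_range_succ, Finset.sum_range_one, d0, d1, d2, d3, d4, d5, d6, d7] at hpart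
  have b1 := inv_pow_bound h1T hcon 1
  have b2 := inv_pow_bound h1T hcon 2
  have b4 := inv_pow_bound h1T hcon 4
  have b6 := inv_pow_bound h1T hcon 6
  have b8 := inv_pow_bound h1T hcon 8
  have hfin : (25/44:ℝ)^1 + (25/44)^2 + (25/44)^4 + (25/44)^6 + (25/44)^8 ≤ 1 := by
    calc (25/44:ℝ)^1 + (25/44)^2 + (25/44)^4 + (25/44)^6 + (25/44)^8
        ≤ 1/qT^1 + 1/qT^2 + 1/qT^4 + 1/qT^6 + 1/qT^8 := by
          gcongr
      _ ≤ 1 := by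
          convert hpart using 1
          push_cast
          ring
  norm_num at hfin

theorem M1_contra {qT q : ℝ} (h1T : 1 < qT) (hq : qT < q)
    (hT : isQuasiGreedy 1 qT (alphaQn 1 1)) (b : ℕ → ℕ) (hqg : isQuasiGreedy 1 q b)
    (hb0 : b 0 = 1) (hb1 : b 1 = 0) : False := by
  have h44 : (44:ℝ)/25 < q := lt_trans (qT_gt h1T hT) hq
  have hq1 : 1 < q := by linarith
  have hq0 : (0:ℝ) < q := by linarith
  have hSb : Summable (fun i => (b i : ℝ) / q ^ (i + 1)) := summable_digits hq1 1 _ hqg.1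
  have hSd : Summable (fun i : ℕ => if i = 1 then 1/q^2 else (0:ℝ)) :=
    summable_of_ne_finset_zero (s := {1}) (fun i hi => by
      simp at hi; simp [hi])
  have hgeo := tsum_geo_aux hq1
  have h2 : ∑' i : ℕ, ((b i : ℝ) / q ^ (i+1) + if i = 1 then 1/q^2 else 0)
      = 1 + 1/q^2 := by
    rw [Summable.tsum_add hSb hSd, hqg.2.2.1, tsum_ite_eq]
  have hle : (1:ℝ) + 1/q^2 ≤ 1/(q-1) := by
    rw [← h2, ← hgeo.2]
    refine Summable.tsum_le_tsum (fun i => ?_) (hSb.add hSd) hgeo.1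
    match i with
    | 0 => simp [hb0, pow_one, one_div]
    | 1 => simp [hb1]
    | (n+2) =>
      have hbn : (b (n+2) : ℝ) ≤ 1 := by exact_mod_cast hqg.1 (n+2)
      simp only [if_neg (by omega : ¬ n + 2 = 1), add_zero]
      rw [div_pow, one_pow]
      gcongr
  have hq10 : (0:ℝ) < q - 1 := by linarith
  rw [le_div_iff₀ hq10] at hle
  have hq2 : (0:ℝ) < q^2 := by positivity
  have hexp : ((1:ℝ) + 1/q^2) * (q-1) * q^2 = q^3 - q^2 + q - 1 := by
    field_simp
    ring
  have h5 : q^3 - q^2 + q - 1 ≤ q^2 := by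
    calc q^3 - q^2 + q - 1 = ((1:ℝ) + 1/q^2) * (q-1) * q^2 := hexp.symm
      _ ≤ 1 * q^2 := mul_le_mul_of_nonneg_right hle hq2.le
      _ = q^2 := one_mul _
  have hpoly : q^3 - 2*q^2 + q - 1 ≤ 0 := by linarith
  nlinarith [mul_nonneg (by linarith : (0:ℝ) ≤ q - 44/25) (sq_nonneg (q - 3/25))]

theorem alphaF_spec {M : ℕ} {q : ℝ} (h : alphaF M q 0 ≠ 0) :
    isQuasiGreedy M q (alphaF M q) := by
  by_cases hE : ∃ b, isQuasiGreedy M q b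
  · have he : alphaF M q = hE.choose := by rw [alphaF, dif_pos hE]
    rw [he]
    exact hE.choose_spec
  · exfalso
    apply h
    rw [alphaF, dif_neg hE]

theorem fund_one {M : ℕ} {a : ℕ → ℕ} (hM2 : 2 ≤ M) (h1 : a 0 = M) :
    IsFundamental M (wminus (pref a 1)) := by
  have hw : wminus (pref a 1) = [M - 1] := by
    rw [wminus_pref a 0]
    simp [pref, h1]
  rw [hw]
  refine ⟨fun d hd => by simp at hd; omega, Or.inl ⟨rfl, hM2, ?_, ?_⟩⟩
  · simp [List.head!]; omega
  · simp [List.head!]; omega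

theorem base_V1 {M : ℕ} {a : ℕ → ℕ} (hM2 : 2 ≤ M) (h1 : a 0 = M) :
    periodic (wminus (pref a 1)) ∈ Vset M := by
  have hw : wminus (pref a 1) = [M - 1] := by
    rw [wminus_pref a 0]
    simp [pref, h1]
  rw [hw]
  have hx : ∀ j, periodic [M - 1] j = M - 1 := fun j => by
    simp [periodic, Nat.mod_one]
  refine ⟨fun i => by rw [hx]; omega, fun n => ⟨?_, ?_⟩⟩
  · rcases eq_or_lt_of_le (show 1 ≤ M - 1 by omega) with he | hlt
    · right
      funext j
      rw [reflSeq, shiftn, hx, hx]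
      omega
    · left
      exact ⟨0, fun i h => absurd h (Nat.not_lt_zero i), by rw [reflSeq, shiftn, hx, hx]; omega⟩
  · right
    funext j
    rw [shiftn, hx, hx]

end S14

/-- If q > q_T, α(q) = a₁a₂… is irreducible and a₁ = M, then there is a
strictly increasing sequence (m_j) of positive integers with a₁…a_{m_j}⁻ fundamental,
m_{j+1} ≤ 2m_j, and m₁ = 2 if M = 1, m₁ = 1 if M ≥ 2. -/
theorem statement14 (M : ℕ) (hM : 1 ≤ M) (qT q : ℝ)
    (hqT : qT ∈ Set.Ioc (1:ℝ) ((M:ℝ)+1)) (halphaT : alphaF M qT = alphaQn M 1)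
    (hq : qT < q) (hqM : q ≤ (M:ℝ)+1)
    (hirr : IrreducibleSeq M (alphaF M q)) (h1 : alphaF M q 0 = M) :
    ∃ m : ℕ → ℕ, StrictMono m ∧ (∀ j, 0 < m j) ∧
      (∀ j, IsFundamental M (wminus (pref (alphaF M q) (m j)))) ∧
      (∀ j, m (j + 1) ≤ 2 * m j) ∧
      m 0 = (if M = 1 then 2 else 1) := by
  classical
  set a := alphaF M q with ha
  obtain ⟨⟨hVd, hVn⟩, hirr2⟩ := hirr
  have hsu : ∀ n, seqLe (shiftn a n) a := fun n => (hVn n).2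
  have hsl : ∀ n, seqLe (reflSeq M a) (shiftn a n) := fun n => (hVn n).1
  have step : ∀ p, S14.GoodW M a p → ∃ p', p < p' ∧ p' ≤ 2 * p ∧ S14.GoodW M a p' := by
    intro p hG
    refine S14.key_step hVd hsu (by have := hG.1; omega : 1 ≤ p) hG.2.1 hG.2.2 ?_
    exact hirr2 p (by have := hG.1; omega) hG.2.1
      (S14.periodic_mem_V hVd hsu hsl h1 hM hG)
  have good2 : S14.GoodW M a 2 := by
    rcases Nat.lt_or_ge M 2 with hM1 | hM2
    · -- M = 1
      have hMeq : M = 1 := by omega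
      subst hMeq
      have hb1 : a 1 ≠ 0 := by
        intro hb1
        have hq0 : a 0 ≠ 0 := by omega
        have hqg : isQuasiGreedy 1 q a := S14.alphaF_spec hq0
        have hqgT : isQuasiGreedy 1 qT (alphaQn 1 1) := by
          rw [← halphaT]
          refine S14.alphaF_spec ?_
          rw [halphaT]
          norm_num [alphaQn, wordThenPer, pref, lamSeq, lam, tau, wplus, reflW,
            List.range_succ, List.getLast!_cons_eq_getLastD]
        exact S14.M1_contra hqT.1 hq hqgT a hqg h1 hb1
      have hb1' : a 1 = 1 := by have := hVd 1; omega
      refine ⟨le_refl 2, ?_, fun i hi1 hi2 hB => ?_⟩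
      · rw [show (2:ℕ) - 1 = 1 from rfl, hb1']
      · have hi : i = 1 := by omega
        subst hi
        have := hB 0 (by omega)
        rw [Nat.add_zero] at this
        omega
    · -- M ≥ 2
      have hbase := S14.key_step hVd hsu (le_refl 1) (by show 1 ≤ a 0; omega)
        (fun i hi1 hi2 => absurd hi2 (by omega))
        (hirr2 1 (le_refl 1) (by show 0 < a 0; omega)
          (S14.base_V1 hM2 h1))
      obtain ⟨p', h1p, hp2, hG⟩ := hbase
      have hp' : p' = 2 := by omega
      rwa [hp'] at hG
  have step' : ∀ p : {p // S14.GoodW M a p},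
      ∃ p' : {p' // S14.GoodW M a p'}, p.1 < p'.1 ∧ p'.1 ≤ 2 * p.1 := by
    rintro ⟨p, hG⟩
    obtain ⟨p', h1', h2', hG'⟩ := step p hG
    exact ⟨⟨p', hG'⟩, h1', h2'⟩
  choose F hF1 hF2 using step'
  set g : ℕ → {p // S14.GoodW M a p} := fun n => F^[n] ⟨2, good2⟩ with hg
  have hg0 : (g 0).1 = 2 := rfl
  have hgs : ∀ n, g (n + 1) = F (g n) := fun n => Function.iterate_succ_apply' F n _
  have hglt : ∀ n, (g n).1 < (g (n + 1)).1 := fun n => by rw [hgs]; exact hF1 _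
  have hgle : ∀ n, (g (n + 1)).1 ≤ 2 * (g n).1 := fun n => by rw [hgs]; exact hF2 _
  have hg2 : ∀ n, 2 ≤ (g n).1 := fun n => (g n).2.1
  rcases Nat.lt_or_ge M 2 with hM1 | hM2
  · have hMeq : M = 1 := by omega
    refine ⟨fun j => (g j).1, strictMono_nat_of_lt_succ hglt,
      fun j => lt_of_lt_of_le two_pos (hg2 j),
      fun j => S14.isFundamental_of_good hVd hsu hsl (g j).2, hgle, ?_⟩
    show (g 0).1 = if M = 1 then 2 else 1
    rw [hg0, if_pos hMeq]
  · refine ⟨fun j => match j with | 0 => 1 | (j' + 1) => (g j').1, ?_, ?_, ?_, ?_, ?_⟩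
    · apply strictMono_nat_of_lt_succ
      intro n
      match n with
      | 0 => exact lt_of_lt_of_le one_lt_two hg0.ge
      | (n' + 1) => exact hglt n'
    · intro j
      match j with
      | 0 => exact one_pos
      | (j' + 1) => exact lt_of_lt_of_le two_pos (hg2 j')
    · intro j
      match j with
      | 0 => exact S14.fund_one hM2 h1
      | (j' + 1) => exact S14.isFundamental_of_good hVd hsu hsl (g j').2
    · intro j
      match j with
      | 0 =>
        show (g 0).1 ≤ 2 * 1
        omega
      | (j' + 1) => exact hgle j'
    · show 1 = if M = 1 then 2 else 1
      rw [if_neg (by omega)]
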